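/- The category of sets satisfies the transfinite transitivity property: let γ be a cardinal, let T be the poset of functions f : β → γ for ordinals β ≤ γ ordered by restriction, and let C be a contravariant functor from T to sets, assigning a set C_f to each node f and a map h_{g,f} : C_g → C_f whenever f is a restriction of g, functorially. Suppose (i) for every ordinal β < γ and every f : β → γ, every element of C_f lies in the image of h_{g,f} : C_g → C_f for some g : β+1 → γ extending f (the family of immediate successors is jointly surjective), and (ii) for every limit ordinal β ≤ γ and every f : β → γ, the maps h_{f, f|α} : C_f → C_{f|α} (α < β) exhibit C_f as the inverse limit of the sets C_{f|α}, i.e., the induced map from C_f to the set of compatible families (x_α)_{α<β} is a bijection. Then for every x ∈ C_∅ there exist a function f : γ → γ and an element y ∈ C_{f} with h_{f,∅}(y) = x; that is, the transfinite composites {C_f → C_∅ : f : γ → γ} form a jointly surjective family. -/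

import Mathlib

universe u

/-- Restriction of `f : Iio β → Iio o` to `Iio α` for `α ≤ β`. -/
def resFn {o β α : Ordinal} (h : α ≤ β) (f : Set.Iio β → Set.Iio o) :
    Set.Iio α → Set.Iio o :=
  fun x => f ⟨x.1, lt_of_lt_of_le x.2 h⟩

/-- The unique function `Iio 0 → Iio o`. -/
def emptyFn (o : Ordinal) : Set.Iio (0 : Ordinal) → Set.Iio o :=
  fun t => absurd t.2 (not_lt_zero (a := t.1))

lemma resFn_zero {o β : Ordinal} (h : (0 : Ordinal) ≤ β) (f : Set.Iio β → Set.Iio o) :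
    resFn h f = emptyFn o :=
  funext fun t => absurd t.2 (not_lt_zero (a := t.1))

universe v

namespace TTaux

lemma sigma_snd_of_eq {A : Type v} {F : A → Type u} {s t : Σ a, F a}
    (hst : s = t) (e : s.1 = t.1) : e ▸ s.2 = t.2 := by subst hst; rfl

lemma sigma_mk_eq {A : Type v} {F : A → Type u} {a a' : A} {b : F a} {b' : F a'}
    (e : a = a') (he : e ▸ b = b') : (⟨a, b⟩ : Σ a, F a) = ⟨a', b'⟩ := by
  subst e; exact congrArg _ he

lemma sigma_snd_of_mk_eq {A : Type v} {F : A → Type u} {a : A} {b b' : F a}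
    (hh : (⟨a, b⟩ : Σ a, F a) = ⟨a, b'⟩) : b = b' := by
  exact sigma_mk_injective hh

lemma sigma_mk_cast {A : Type v} {F : A → Type u} (s : Σ a, F a) {a' : A}
    (e : s.1 = a') : (⟨a', cast (congrArg F e) s.2⟩ : Σ a, F a) = s := by
  cases s; subst e; rfl

variable {γ : Cardinal.{u}}
  (C : (β : Set.Iic γ.ord) → (Set.Iio β.1 → Set.Iio γ.ord) → Type u)

abbrev D (β : Set.Iic γ.ord) : Type (u+1) := Σ f : Set.Iio β.1 → Set.Iio γ.ord, C β f

variable (h : ∀ (β₁ β₂ : Set.Iic γ.ord) (h12 : β₁.1 ≤ β₂.1) (f : Set.Iio β₂.1 → Set.Iio γ.ord),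
      C β₂ f → C β₁ (resFn h12 f))

noncomputable def res {β₁ β₂ : Set.Iic γ.ord} (h12 : β₁.1 ≤ β₂.1) (p : D C β₂) : D C β₁ :=
  ⟨resFn h12 p.1, h β₁ β₂ h12 p.1 p.2⟩

abbrev T := Σ β : Set.Iic γ.ord, D C β

def rel (p q : T C) : Prop := ∃ h12 : p.1.1 ≤ q.1.1, res C h h12 q.2 = p.2

variable (hid : ∀ (β : Set.Iic γ.ord) (f : Set.Iio β.1 → Set.Iio γ.ord) (x : C β f),
      h β β le_rfl f x = x)
  (hcomp : ∀ (β₁ β₂ β₃ : Set.Iic γ.ord) (h12 : β₁.1 ≤ β₂.1) (h23 : β₂.1 ≤ β₃.1)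
      (f : Set.Iio β₃.1 → Set.Iio γ.ord) (x : C β₃ f),
      h β₁ β₂ h12 (resFn h23 f) (h β₂ β₃ h23 f x) = h β₁ β₃ (h12.trans h23) f x)

include hid in
lemma res_self {β : Set.Iic γ.ord} (p : D C β) : res C h le_rfl p = p := by
  show (⟨p.1, h β β le_rfl p.1 p.2⟩ : D C β) = p
  exact congrArg (Sigma.mk p.1) (hid β p.1 p.2)

include hcomp in
lemma res_res {β₁ β₂ β₃ : Set.Iic γ.ord} (h12 : β₁.1 ≤ β₂.1) (h23 : β₂.1 ≤ β₃.1)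
    (p : D C β₃) : res C h h12 (res C h h23 p) = res C h (h12.trans h23) p := by
  show (⟨resFn (h12.trans h23) p.1, h β₁ β₂ h12 (resFn h23 p.1) (h β₂ β₃ h23 p.1 p.2)⟩ : D C β₁)
      = _
  exact congrArg (Sigma.mk (resFn (h12.trans h23) p.1)) (hcomp β₁ β₂ β₃ h12 h23 p.1 p.2)

include hid in
lemma rel_refl (p : T C) : rel C h p p := ⟨le_rfl, res_self C h hid p.2⟩

include hcomp in
lemma rel_trans {p q r : T C} (hpq : rel C h p q) (hqr : rel C h q r) : rel C h p r := by
  obtain ⟨h12, e1⟩ := hpq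
  obtain ⟨h23, e2⟩ := hqr
  exact ⟨h12.trans h23, by rw [← res_res C h hcomp h12 h23, e2, e1]⟩

include hid in
lemma rel_antisymm {p q : T C} (hr : rel C h p q) (hba : q.1.1 ≤ p.1.1) : p = q := by
  obtain ⟨h12, he⟩ := hr
  obtain ⟨β₁, d₁⟩ := p
  obtain ⟨β₂, d₂⟩ := q
  have hβ : β₁ = β₂ := Subtype.ext (le_antisymm h12 hba)
  subst hβ
  exact congrArg (Sigma.mk β₁) (((res_self C h hid d₂).symm.trans he).symm)

lemma rel_apply {p q : T C} (hr : rel C h p q) {ι : Ordinal}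
    (h1 : ι < p.1.1) (h2 : ι < q.1.1) : p.2.1 ⟨ι, h1⟩ = q.2.1 ⟨ι, h2⟩ := by
  obtain ⟨h12, he⟩ := hr
  have e1 : resFn h12 q.2.1 = p.2.1 := congrArg Sigma.fst he
  exact (congrFun e1.symm ⟨ι, h1⟩).trans rfl

include hcomp in
lemma rel_res {p q : T C} (hr : rel C h p q) {δ : Set.Iic γ.ord}
    (ha : δ.1 ≤ p.1.1) (hb : δ.1 ≤ q.1.1) : res C h hb q.2 = res C h ha p.2 := by
  obtain ⟨h12, he⟩ := hr
  rw [← he, res_res C h hcomp ha h12]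

end TTaux

/-- The category of sets satisfies the transfinite transitivity property: given a
contravariant functor `C` on the tree of functions `f : β → γ` (`β ≤ γ`) ordered by
restriction, such that at each node the maps from its immediate successors are jointly
surjective, and at each limit node the set is the inverse limit of its predecessors, every
element of the root `C_∅` is in the image of `C_f → C_∅` for some branch `f : γ → γ`. -/
theorem Set_transfinite_transitivity (γ : Cardinal.{u})
    (C : (β : Set.Iic γ.ord) → (Set.Iio β.1 → Set.Iio γ.ord) → Type u)
    (h : ∀ (β₁ β₂ : Set.Iic γ.ord) (h12 : β₁.1 ≤ β₂.1) (f : Set.Iio β₂.1 → Set.Iio γ.ord),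
      C β₂ f → C β₁ (resFn h12 f))
    (hid : ∀ (β : Set.Iic γ.ord) (f : Set.Iio β.1 → Set.Iio γ.ord) (x : C β f),
      h β β le_rfl f x = x)
    (hcomp : ∀ (β₁ β₂ β₃ : Set.Iic γ.ord) (h12 : β₁.1 ≤ β₂.1) (h23 : β₂.1 ≤ β₃.1)
      (f : Set.Iio β₃.1 → Set.Iio γ.ord) (x : C β₃ f),
      h β₁ β₂ h12 (resFn h23 f) (h β₂ β₃ h23 f x) = h β₁ β₃ (h12.trans h23) f x)
    (hsucc : ∀ (β : Ordinal) (hβ : β < γ.ord) (f : Set.Iio β → Set.Iio γ.ord)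
      (x : C ⟨β, Set.mem_Iic.mpr (le_of_lt hβ)⟩ f),
      ∃ (g : Set.Iio (β + 1) → Set.Iio γ.ord)
        (hg : resFn (le_self_add : β ≤ β + 1) g = f)
        (y : C ⟨β + 1, Set.mem_Iic.mpr (Order.add_one_le_iff.mpr hβ)⟩ g),
        hg ▸ h ⟨β, Set.mem_Iic.mpr (le_of_lt hβ)⟩
            ⟨β + 1, Set.mem_Iic.mpr (Order.add_one_le_iff.mpr hβ)⟩
            (le_self_add : β ≤ β + 1) g y = x)
    (hlim : ∀ (β : Set.Iic γ.ord), Order.IsSuccLimit β.1 →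
      ∀ (f : Set.Iio β.1 → Set.Iio γ.ord)
        (u : (α : Set.Iio β.1) →
          C ⟨α.1, Set.mem_Iic.mpr (le_of_lt (lt_of_lt_of_le α.2 β.2))⟩ (resFn (le_of_lt α.2) f)),
        (∀ (α₁ α₂ : Set.Iio β.1) (h12 : α₁.1 ≤ α₂.1),
          h ⟨α₁.1, Set.mem_Iic.mpr (le_of_lt (lt_of_lt_of_le α₁.2 β.2))⟩
            ⟨α₂.1, Set.mem_Iic.mpr (le_of_lt (lt_of_lt_of_le α₂.2 β.2))⟩
            h12 (resFn (le_of_lt α₂.2) f) (u α₂) = u α₁) →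
        ∃! x : C β f, ∀ α : Set.Iio β.1,
          h ⟨α.1, Set.mem_Iic.mpr (le_of_lt (lt_of_lt_of_le α.2 β.2))⟩ β
            (le_of_lt α.2) f x = u α) :
    ∀ x : C ⟨0, Set.mem_Iic.mpr (zero_le : (0 : Ordinal) ≤ γ.ord)⟩ (emptyFn γ.ord),
      ∃ (f : Set.Iio γ.ord → Set.Iio γ.ord) (y : C ⟨γ.ord, Set.mem_Iic.mpr le_rfl⟩ f),
        (resFn_zero (zero_le : (0 : Ordinal) ≤ γ.ord) f) ▸
            h ⟨0, Set.mem_Iic.mpr (zero_le : (0 : Ordinal) ≤ γ.ord)⟩ ⟨γ.ord, Set.mem_Iic.mpr le_rfl⟩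
              (zero_le : (0 : Ordinal) ≤ γ.ord) f y = x := by
  intro x
  classical
  set root : TTaux.T C := ⟨⟨0, Set.mem_Iic.mpr (zero_le : (0 : Ordinal) ≤ γ.ord)⟩, emptyFn γ.ord, x⟩
    with hroot
  have hzorn : ∃ m : {p : TTaux.T C // TTaux.rel C h root p},
      ∀ a : {p : TTaux.T C // TTaux.rel C h root p},
        TTaux.rel C h m.1 a.1 → TTaux.rel C h a.1 m.1 := by
    apply exists_maximal_of_chains_bounded
      (r := fun p q : {p : TTaux.T C // TTaux.rel C h root p} => TTaux.rel C h p.1 q.1)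
    · intro c hc
      rcases c.eq_empty_or_nonempty with rfl | hne
      · exact ⟨⟨root, TTaux.rel_refl C h hid root⟩, by simp⟩
      have hrel2 : ∀ p q : {p : TTaux.T C // TTaux.rel C h root p}, p ∈ c → q ∈ c →
          TTaux.rel C h p.1 q.1 ∨ TTaux.rel C h q.1 p.1 := by
        intro p q hp hq
        rcases eq_or_ne p q with rfl | hne'
        · exact Or.inl (TTaux.rel_refl C h hid p.1)
        · exact hc hp hq hne'
      set Sb : Set Ordinal := (fun p : {p : TTaux.T C // TTaux.rel C h root p} => p.1.1.1) '' c
        with hSb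
      have hSbne : Sb.Nonempty := hne.image _
      have hbdd : BddAbove Sb := ⟨γ.ord, by rintro b ⟨p, hp, rfl⟩; exact p.1.1.2⟩
      set B : Ordinal := sSup Sb with hBdef
      have hBle : B ≤ γ.ord := csSup_le hSbne (by rintro b ⟨p, hp, rfl⟩; exact p.1.1.2)
      have hleB : ∀ q : {p : TTaux.T C // TTaux.rel C h root p}, q ∈ c → q.1.1.1 ≤ B :=
        fun q hq => le_csSup hbdd ⟨q, hq, rfl⟩
      by_cases hmem : B ∈ Sb
      · obtain ⟨p, hpc, hpB⟩ := hmem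
        refine ⟨p, fun q hq => ?_⟩
        rcases hrel2 q p hq hpc with hr | hr
        · exact hr
        · have e := TTaux.rel_antisymm C h hid hr
            (le_of_le_of_eq (hleB q hq) hpB.symm)
          rw [e]
          exact TTaux.rel_refl C h hid q.1
      · -- B is not attained: limit case
        have hltB : ∀ q : {p : TTaux.T C // TTaux.rel C h root p}, q ∈ c → q.1.1.1 < B :=
          fun q hq => lt_of_le_of_ne (hleB q hq) (fun e => hmem (e ▸ ⟨q, hq, rfl⟩))
        have hpick : ∀ a : Ordinal, a < B →
            ∃ q : {p : TTaux.T C // TTaux.rel C h root p}, q ∈ c ∧ a < q.1.1.1 := by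
          intro a ha
          obtain ⟨b, ⟨q, hq, rfl⟩, hab⟩ := exists_lt_of_lt_csSup hSbne ha
          exact ⟨q, hq, hab⟩
        choose pick hpc hps using hpick
        obtain ⟨q₀, hq₀⟩ := hne
        have hBlim : Order.IsSuccLimit B := by
          rw [Ordinal.isSuccLimit_iff, Order.isSuccPrelimit_iff_succ_lt]
          constructor
          · exact pos_iff_ne_zero.mp
              (lt_of_le_of_lt zero_le (hltB q₀ hq₀))
          · intro a ha
            rw [← Ordinal.add_one_eq_succ]
            exact lt_of_le_of_lt (Order.add_one_le_iff.mpr (hps a ha))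
              (hltB (pick a ha) (hpc a ha))
        set βB : Set.Iic γ.ord := ⟨B, Set.mem_Iic.mpr hBle⟩ with hβB
        set fB : Set.Iio B → Set.Iio γ.ord :=
          fun ι => (pick ι.1 ι.2).1.2.1 ⟨ι.1, hps ι.1 ι.2⟩ with hfBdef
        -- union lemma
        have hfB : ∀ (q : {p : TTaux.T C // TTaux.rel C h root p}) (hq : q ∈ c)
            (ι : Ordinal) (h1 : ι < B) (h2 : ι < q.1.1.1),
            fB ⟨ι, h1⟩ = q.1.2.1 ⟨ι, h2⟩ := by
          intro q hq ι h1 h2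
          rcases hrel2 (pick ι h1) q (hpc ι h1) hq with hr | hr
          · exact TTaux.rel_apply C h hr (hps ι h1) h2
          · exact (TTaux.rel_apply C h hr h2 (hps ι h1)).symm
        have hresf : ∀ (q : {p : TTaux.T C // TTaux.rel C h root p}) (hq : q ∈ c)
            (δ : Ordinal) (hδB : δ ≤ B) (hδq : δ ≤ q.1.1.1),
            resFn hδB fB = resFn hδq q.1.2.1 := by
          intro q hq δ hδB hδq
          funext ι
          exact hfB q hq ι.1 (lt_of_lt_of_le ι.2 hδB) (lt_of_lt_of_le ι.2 hδq)
        -- the compatible family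
        set sig : (α : Set.Iio B) → TTaux.D C ⟨α.1, Set.mem_Iic.mpr
            (le_of_lt (lt_of_lt_of_le α.2 βB.2))⟩ :=
          fun α => TTaux.res C h (le_of_lt (hps α.1 α.2)) (pick α.1 α.2).1.2 with hsig
        have esig : ∀ α : Set.Iio B, (sig α).1 = resFn (le_of_lt α.2) fB := by
          intro α
          exact (hresf (pick α.1 α.2) (hpc α.1 α.2) α.1 (le_of_lt α.2)
            (le_of_lt (hps α.1 α.2))).symm
        set u : (α : Set.Iio B) → C ⟨α.1, Set.mem_Iic.mpr
            (le_of_lt (lt_of_lt_of_le α.2 βB.2))⟩ (resFn (le_of_lt α.2) fB) :=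
          fun α => cast (congrArg _ (esig α)) (sig α).2 with hu
        have hmku : ∀ α : Set.Iio B,
            (⟨resFn (le_of_lt α.2) fB, u α⟩ : TTaux.D C ⟨α.1, Set.mem_Iic.mpr
              (le_of_lt (lt_of_lt_of_le α.2 βB.2))⟩) = sig α :=
          fun α => TTaux.sigma_mk_cast (sig α) (esig α)
        have hsigres : ∀ (α₁ α₂ : Set.Iio B) (h12 : α₁.1 ≤ α₂.1),
            TTaux.res C h (β₁ := ⟨α₁.1, Set.mem_Iic.mpr
                (le_of_lt (lt_of_lt_of_le α₁.2 βB.2))⟩) h12 (sig α₂) = sig α₁ := by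
          intro α₁ α₂ h12
          show TTaux.res C h h12 (TTaux.res C h _ _) = _
          rw [TTaux.res_res C h hcomp]
          rcases hrel2 (pick α₁.1 α₁.2) (pick α₂.1 α₂.2) (hpc α₁.1 α₁.2) (hpc α₂.1 α₂.2)
            with hr | hr
          · exact TTaux.rel_res C h hcomp hr (le_of_lt (hps α₁.1 α₁.2))
              (h12.trans (le_of_lt (hps α₂.1 α₂.2)))
          · exact (TTaux.rel_res C h hcomp hr
              (h12.trans (le_of_lt (hps α₂.1 α₂.2))) (le_of_lt (hps α₁.1 α₁.2))).symm
        have ucoh : ∀ (α₁ α₂ : Set.Iio B) (h12 : α₁.1 ≤ α₂.1),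
            h ⟨α₁.1, Set.mem_Iic.mpr (le_of_lt (lt_of_lt_of_le α₁.2 βB.2))⟩
              ⟨α₂.1, Set.mem_Iic.mpr (le_of_lt (lt_of_lt_of_le α₂.2 βB.2))⟩
              h12 (resFn (le_of_lt α₂.2) fB) (u α₂) = u α₁ := by
          intro α₁ α₂ h12
          apply TTaux.sigma_snd_of_mk_eq (F := C ⟨α₁.1, Set.mem_Iic.mpr
            (le_of_lt (lt_of_lt_of_le α₁.2 βB.2))⟩)
          calc (⟨resFn (le_of_lt α₁.2) fB,
                h ⟨α₁.1, Set.mem_Iic.mpr (le_of_lt (lt_of_lt_of_le α₁.2 βB.2))⟩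
                  ⟨α₂.1, Set.mem_Iic.mpr (le_of_lt (lt_of_lt_of_le α₂.2 βB.2))⟩
                  h12 (resFn (le_of_lt α₂.2) fB) (u α₂)⟩ : TTaux.D C _)
              = TTaux.res C h h12 ⟨resFn (le_of_lt α₂.2) fB, u α₂⟩ := rfl
            _ = TTaux.res C h h12 (sig α₂) := by rw [hmku α₂]
            _ = sig α₁ := hsigres α₁ α₂ h12
            _ = ⟨resFn (le_of_lt α₁.2) fB, u α₁⟩ := (hmku α₁).symm
        obtain ⟨xB, hxB, -⟩ := hlim βB hBlim fB u ucoh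
        have hub : ∀ q : {p : TTaux.T C // TTaux.rel C h root p}, q ∈ c →
            TTaux.rel C h q.1 ⟨βB, fB, xB⟩ := by
          intro q hq
          refine ⟨hleB q hq, ?_⟩
          set α : Set.Iio B := ⟨q.1.1.1, hltB q hq⟩ with hα
          calc TTaux.res C h (hleB q hq) (⟨fB, xB⟩ : TTaux.D C βB)
              = ⟨resFn (le_of_lt α.2) fB, u α⟩ := by
                exact congrArg (Sigma.mk (resFn (le_of_lt α.2) fB)) (hxB α)
            _ = sig α := hmku α
            _ = TTaux.res C h le_rfl q.1.2 := by
                rcases hrel2 q (pick α.1 α.2) hq (hpc α.1 α.2) with hr | hr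
                · exact TTaux.rel_res C h hcomp hr (le_rfl) (le_of_lt (hps α.1 α.2))
                · exact (TTaux.rel_res C h hcomp hr
                    (le_of_lt (hps α.1 α.2)) le_rfl).symm
            _ = q.1.2 := TTaux.res_self C h hid q.1.2
        refine ⟨⟨⟨βB, fB, xB⟩, TTaux.rel_trans C h hcomp q₀.2 (hub q₀ hq₀)⟩, hub⟩
    · intro a b c' hab hbc
      exact TTaux.rel_trans C h hcomp hab hbc
  obtain ⟨m, hmax⟩ := hzorn
  have hm : m.1.1.1 = γ.ord := by
    rcases lt_or_eq_of_le (Set.mem_Iic.mp m.1.1.2) with hlt | hm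
    · exfalso
      obtain ⟨g, hg, y, hy⟩ := hsucc m.1.1.1 hlt m.1.2.1 m.1.2.2
      have hrelm : TTaux.rel C h m.1
          ⟨⟨m.1.1.1 + 1, Set.mem_Iic.mpr (Order.add_one_le_iff.mpr hlt)⟩, g, y⟩ := by
        refine ⟨le_self_add, ?_⟩
        exact TTaux.sigma_mk_eq hg hy
      obtain ⟨h12, -⟩ := hmax ⟨_, TTaux.rel_trans C h hcomp m.2 hrelm⟩ hrelm
      have : m.1.1.1 < m.1.1.1 + 1 := by
        rw [Ordinal.add_one_eq_succ]; exact Order.lt_succ _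
      exact absurd h12 (not_le.mpr this)
    · exact hm
  obtain ⟨⟨⟨β, hβ⟩, fm, ym⟩, hrt⟩ := m
  simp only at hm
  subst hm
  refine ⟨fm, ym, ?_⟩
  obtain ⟨h01, he⟩ := hrt
  exact TTaux.sigma_snd_of_eq he (resFn_zero (zero_le : (0 : Ordinal) ≤ γ.ord) fm)
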